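/- For sl2, in the bialgebra 𝔹 generated by a = x ⊗ x^∨, b = y ⊗ x^∨, c = x ⊗ y^∨, d = y ⊗ y^∨ ∈ 𝔹(1) ⊗ 𝔹(−1), the relations cb = bc = db = dc = ba = ca = 0 and da = 1 hold, and the basis elements satisfy x^i y^j ⊗ (x^r y^s)^∨ = a^r c^{i−r} d^j when i ≥ r and = a^i b^{r−i} d^s when i ≤ r. -/

import Mathlib

/-- `x^i y^j` is represented as `(i, j) : ℕ × ℕ`, an element of the sl2-crystal `B(i+j)`. -/
def et (p : ℕ × ℕ) : Option (ℕ × ℕ) := if p.1 = 0 then none else some (p.1 - 1, p.2 + 1)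
def ft (p : ℕ × ℕ) : Option (ℕ × ℕ) := if p.2 = 0 then none else some (p.1 + 1, p.2 - 1)
def eps (p : ℕ × ℕ) : ℤ := p.1
def phi (p : ℕ × ℕ) : ℤ := p.2
def wt (p : ℕ × ℕ) : ℤ := (p.2 : ℤ) - (p.1 : ℤ)

/-- Kashiwara tensor product rule for `ẽ` on a pair of elements. -/
def etT (b : (ℕ × ℕ) × (ℕ × ℕ)) : Option ((ℕ × ℕ) × (ℕ × ℕ)) :=
  if eps b.2 ≤ phi b.1 then (et b.1).map (fun a => (a, b.2)) else (et b.2).map (fun a => (b.1, a))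

/-- Kashiwara tensor product rule for `f̃` on a pair of elements. -/
def ftT (b : (ℕ × ℕ) × (ℕ × ℕ)) : Option ((ℕ × ℕ) × (ℕ × ℕ)) :=
  if eps b.2 < phi b.1 then (ft b.1).map (fun a => (a, b.2)) else (ft b.2).map (fun a => (b.1, a))

def epsT (b : (ℕ × ℕ) × (ℕ × ℕ)) : ℤ := max (eps b.1) (eps b.2 - wt b.1)
def phiT (b : (ℕ × ℕ) × (ℕ × ℕ)) : ℤ := max (phi b.1 + wt b.2) (phi b.2)
def wtT (b : (ℕ × ℕ) × (ℕ × ℕ)) : ℤ := wt b.1 + wt b.2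

/-- Iterated application of a pointed (partial) operator. -/
def iterOp {α : Type} (g : α → Option α) : ℕ → α → Option α
  | 0, a => some a
  | n + 1, a => (g a).bind (iterOp g n)

/-- The underlying set of the sl2-crystal `B(n)`: monomials `x^i y^j` with `i + j = n`. -/
def Bel (n : ℕ) : Type := {p : ℕ × ℕ // p.1 + p.2 = n}

def etB {n : ℕ} (b : Bel n) : Option (Bel n) :=
  if h : b.val.1 = 0 then none
  else some ⟨(b.val.1 - 1, b.val.2 + 1), by have := b.2; omega⟩

def ftB {n : ℕ} (b : Bel n) : Option (Bel n) :=
  if h : b.val.2 = 0 then none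
  else some ⟨(b.val.1 + 1, b.val.2 - 1), by have := b.2; omega⟩

/-- The basis of the sl2 crystal bialgebra `𝔹 = ⊕_n ℤB(n) ⊗ ℤB(n)^∨`: pairs
`x^i y^j ⊗ (x^r y^s)^∨` with `i + j = r + s`. -/
def PB : Type := {p : (ℕ × ℕ) × (ℕ × ℕ) // p.1.1 + p.1.2 = p.2.1 + p.2.2}

/-- Index of the Clebsch–Gordan component of `B(n) ⊗ B(m)` containing `u ⊗ v`. -/
def comp16 (u v : ℕ × ℕ) : ℕ := min u.2 v.1

/-- The element `u·v`: the image of `u ⊗ v` under the identification of its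
Clebsch–Gordan component with `B(n+m−2k)`. -/
def pelt (u v : ℕ × ℕ) : ℕ × ℕ :=
  if v.1 ≤ u.2 then (u.1, u.1 + u.2 + v.1 + v.2 - 2 * min u.2 v.1 - u.1)
  else (u.1 + v.1 - u.2, u.1 + u.2 + v.1 + v.2 - 2 * min u.2 v.1 - (u.1 + v.1 - u.2))

lemma pelt_sum (u v : ℕ × ℕ) :
    (pelt u v).1 + (pelt u v).2 = u.1 + u.2 + v.1 + v.2 - 2 * min u.2 v.1 := by
  unfold pelt; split_ifs <;> simp <;> omega

/-- The product of basis elements of `𝔹`: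
`(u ⊗ u')·(v ⊗ v') = (u·v) ⊗ (v'·u')` when `u·v` and `(v'·u')^∨` lie in the same
irreducible component (equivalently, the component indices agree), and `0` otherwise. -/
def pmul16 (X Y : PB) : Option PB :=
  if h : comp16 X.val.1 Y.val.1 = comp16 X.val.2 Y.val.2 then
    some ⟨(pelt X.val.1 Y.val.1, pelt X.val.2 Y.val.2), by
      rw [pelt_sum, pelt_sum]
      have hX := X.2; have hY := Y.2
      simp only [comp16] at h
      omega⟩
  else none

def one16 : PB := ⟨((0, 0), (0, 0)), rfl⟩
/-- `a = x ⊗ x^∨`. -/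
def a16 : PB := ⟨((1, 0), (1, 0)), rfl⟩
/-- `b = y ⊗ x^∨`. -/
def b16 : PB := ⟨((0, 1), (1, 0)), rfl⟩
/-- `c = x ⊗ y^∨`. -/
def c16 : PB := ⟨((1, 0), (0, 1)), rfl⟩
/-- `d = y ⊗ y^∨`. -/
def d16 : PB := ⟨((0, 1), (0, 1)), rfl⟩

/-- Product of a list of basis elements (with unit seed), `0`-absorbing. -/
def listProd (l : List PB) : Option PB :=
  l.foldl (fun acc x => acc.bind (fun u => pmul16 u x)) (some one16)

-- Auxiliary definitions and lemmas

/-- Helper constructor for `PB` with a clean hypothesis. -/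
def mkPB (i j r s : ℕ) (h : i + j = r + s) : PB := ⟨((i, j), (r, s)), h⟩

lemma mkPB_congr (i j r s i' j' r' s' : ℕ) (h : i + j = r + s) (h' : i' + j' = r' + s')
    (e1 : i = i') (e2 : j = j') (e3 : r = r') (e4 : s = s') :
    mkPB i j r s h = mkPB i' j' r' s' h' := by
  subst e1; subst e2; subst e3; subst e4; rfl

lemma pmul_a (m : ℕ) :
    pmul16 (mkPB m 0 m 0 rfl) a16 = some (mkPB (m + 1) 0 (m + 1) 0 rfl) := by
  unfold pmul16
  rw [dif_pos (by simp [comp16, a16, mkPB])]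
  refine congrArg some ?_
  apply Subtype.ext
  simp only [pelt, a16, mkPB]
  split_ifs <;> simp only [Prod.mk.injEq, Nat.min_def, true_and, and_true] <;> split_ifs <;> simp_all <;> omega

lemma pmul_c (m r : ℕ) (h : m + 0 = r + (m - r)) :
    pmul16 (mkPB m 0 r (m - r) h) c16
      = some (mkPB (m + 1) 0 r (m + 1 - r) (by omega)) := by
  unfold pmul16
  rw [dif_pos (by simp [comp16, c16, mkPB])]
  refine congrArg some ?_
  apply Subtype.ext
  simp only [pelt, c16, mkPB]
  split_ifs <;> simp only [Prod.mk.injEq, Nat.min_def, true_and, and_true] <;> split_ifs <;> simp_all <;> omega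

lemma pmul_b (i m : ℕ) (h : i + m = (i + m) + 0) :
    pmul16 (mkPB i m (i + m) 0 h) b16
      = some (mkPB i (m + 1) (i + m + 1) 0 (by omega)) := by
  unfold pmul16
  rw [dif_pos (by simp [comp16, b16, mkPB])]
  refine congrArg some ?_
  apply Subtype.ext
  simp only [pelt, b16, mkPB]
  split_ifs <;> simp only [Prod.mk.injEq, Nat.min_def, true_and, and_true] <;> split_ifs <;> simp <;> split <;> omega

lemma pmul_d (i t r u : ℕ) (h : i + t = r + u) :
    pmul16 (mkPB i t r u h) d16
      = some (mkPB i (t + 1) r (u + 1) (by omega)) := by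
  unfold pmul16
  rw [dif_pos (by simp [comp16, d16, mkPB])]
  refine congrArg some ?_
  apply Subtype.ext
  simp only [pelt, d16, mkPB]
  split_ifs <;> simp only [Prod.mk.injEq, Nat.min_def, true_and, and_true] <;> split_ifs <;> simp_all <;> omega

def pstep : Option PB → PB → Option PB := fun acc x => acc.bind (fun u => pmul16 u x)

lemma fold_a : ∀ (n m : ℕ),
    (List.replicate n a16).foldl pstep (some (mkPB m 0 m 0 rfl))
      = some (mkPB (m + n) 0 (m + n) 0 rfl)
  | 0, m => by simp
  | n + 1, m => by
    rw [List.replicate_succ, List.foldl_cons]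
    show (List.replicate n a16).foldl pstep (pstep _ _) = _
    rw [show pstep (some (mkPB m 0 m 0 rfl)) a16
        = some (mkPB (m + 1) 0 (m + 1) 0 rfl) from pmul_a m]
    rw [fold_a n (m + 1)]
    exact congrArg some (mkPB_congr _ _ _ _ _ _ _ _ _ _ (by omega) rfl (by omega) rfl)

lemma fold_c : ∀ (n m r : ℕ) (h : m + 0 = r + (m - r)),
    (List.replicate n c16).foldl pstep (some (mkPB m 0 r (m - r) h))
      = some (mkPB (m + n) 0 r (m + n - r) (by omega))
  | 0, m, r, h => by simp
  | n + 1, m, r, h => by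
    rw [List.replicate_succ, List.foldl_cons]
    show (List.replicate n c16).foldl pstep (pstep _ _) = _
    rw [show pstep (some (mkPB m 0 r (m - r) h)) c16
        = some (mkPB (m + 1) 0 r (m + 1 - r) (by omega)) from pmul_c m r h]
    rw [show (mkPB (m + 1) 0 r (m + 1 - r) (by omega))
        = mkPB (m + 1) 0 r ((m + 1) - r) (by omega) from
      mkPB_congr _ _ _ _ _ _ _ _ _ _ rfl rfl rfl rfl]
    rw [fold_c n (m + 1) r (by omega)]
    exact congrArg some (mkPB_congr _ _ _ _ _ _ _ _ _ _ (by omega) rfl rfl (by omega))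

lemma fold_b : ∀ (n i m : ℕ) (h : i + m = (i + m) + 0),
    (List.replicate n b16).foldl pstep (some (mkPB i m (i + m) 0 h))
      = some (mkPB i (m + n) (i + m + n) 0 (by omega))
  | 0, i, m, h => by simp
  | n + 1, i, m, h => by
    rw [List.replicate_succ, List.foldl_cons]
    show (List.replicate n b16).foldl pstep (pstep _ _) = _
    rw [show pstep (some (mkPB i m (i + m) 0 h)) b16
        = some (mkPB i (m + 1) (i + m + 1) 0 (by omega)) from pmul_b i m h]
    rw [show (mkPB i (m + 1) (i + m + 1) 0 (by omega))
        = mkPB i (m + 1) (i + (m + 1)) 0 (by omega) from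
      mkPB_congr _ _ _ _ _ _ _ _ _ _ rfl rfl (by omega) rfl]
    rw [fold_b n i (m + 1) (by omega)]
    exact congrArg some (mkPB_congr _ _ _ _ _ _ _ _ _ _ rfl (by omega) (by omega) rfl)

lemma fold_d : ∀ (n i t r u : ℕ) (h : i + t = r + u),
    (List.replicate n d16).foldl pstep (some (mkPB i t r u h))
      = some (mkPB i (t + n) r (u + n) (by omega))
  | 0, i, t, r, u, h => by simp
  | n + 1, i, t, r, u, h => by
    rw [List.replicate_succ, List.foldl_cons]
    show (List.replicate n d16).foldl pstep (pstep _ _) = _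
    rw [show pstep (some (mkPB i t r u h)) d16
        = some (mkPB i (t + 1) r (u + 1) (by omega)) from pmul_d i t r u h]
    rw [fold_d n i (t + 1) r (u + 1) (by omega)]
    exact congrArg some (mkPB_congr _ _ _ _ _ _ _ _ _ _ rfl (by omega) rfl (by omega))

lemma pmul_none (X Y : PB) (h : ¬ comp16 X.val.1 Y.val.1 = comp16 X.val.2 Y.val.2) :
    pmul16 X Y = none := by
  unfold pmul16; rw [dif_neg h]

/-- In the sl2 crystal bialgebra `𝔹`, the generators
`a = x ⊗ x^∨`, `b = y ⊗ x^∨`, `c = x ⊗ y^∨`, `d = y ⊗ y^∨` satisfy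
`cb = bc = db = dc = ba = ca = 0` and `da = 1`, and the basis elements satisfy
`x^i y^j ⊗ (x^r y^s)^∨ = a^r c^{i−r} d^j` when `i ≥ r` and
`x^i y^j ⊗ (x^r y^s)^∨ = a^i b^{r−i} d^s` when `i ≤ r`. -/
theorem stmt16 :
    pmul16 c16 b16 = none ∧ pmul16 b16 c16 = none ∧ pmul16 d16 b16 = none ∧
    pmul16 d16 c16 = none ∧ pmul16 b16 a16 = none ∧ pmul16 c16 a16 = none ∧
    pmul16 d16 a16 = some one16 ∧
    (∀ (i j r s : ℕ) (hsum : i + j = r + s), r ≤ i →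
      listProd (List.replicate r a16 ++ List.replicate (i - r) c16 ++ List.replicate j d16)
        = some ⟨((i, j), (r, s)), hsum⟩) ∧
    (∀ (i j r s : ℕ) (hsum : i + j = r + s), i ≤ r →
      listProd (List.replicate i a16 ++ List.replicate (r - i) b16 ++ List.replicate s d16)
        = some ⟨((i, j), (r, s)), hsum⟩) := by
  refine ⟨pmul_none _ _ (by decide), pmul_none _ _ (by decide), pmul_none _ _ (by decide),
    pmul_none _ _ (by decide), pmul_none _ _ (by decide), pmul_none _ _ (by decide),
    ?_, ?_, ?_⟩
  · unfold pmul16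
    rw [dif_pos (by decide)]
    rfl
  · intro i j r s hsum hri
    unfold listProd
    rw [List.foldl_append, List.foldl_append]
    show (List.replicate j d16).foldl pstep
      ((List.replicate (i - r) c16).foldl pstep
        ((List.replicate r a16).foldl pstep (some one16))) = _
    rw [show (some one16 : Option PB) = some (mkPB 0 0 0 0 rfl) from rfl]
    rw [fold_a r 0]
    rw [show (mkPB (0 + r) 0 (0 + r) 0 rfl)
        = mkPB r 0 r (r - r) (by omega) from
      mkPB_congr _ _ _ _ _ _ _ _ _ _ (by omega) rfl (by omega) (by omega)]
    rw [fold_c (i - r) r r (by omega)]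
    rw [show (mkPB (r + (i - r)) 0 r (r + (i - r) - r) (by omega))
        = mkPB i 0 r (i - r) (by omega) from
      mkPB_congr _ _ _ _ _ _ _ _ _ _ (by omega) rfl rfl (by omega)]
    rw [fold_d j i 0 r (i - r) (by omega)]
    exact congrArg some (mkPB_congr _ _ _ _ _ _ _ _ _ _ rfl (by omega) rfl (by omega))
  · intro i j r s hsum hir
    unfold listProd
    rw [List.foldl_append, List.foldl_append]
    show (List.replicate s d16).foldl pstep
      ((List.replicate (r - i) b16).foldl pstep
        ((List.replicate i a16).foldl pstep (some one16))) = _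
    rw [show (some one16 : Option PB) = some (mkPB 0 0 0 0 rfl) from rfl]
    rw [fold_a i 0]
    rw [show (mkPB (0 + i) 0 (0 + i) 0 rfl)
        = mkPB i 0 (i + 0) 0 (by omega) from
      mkPB_congr _ _ _ _ _ _ _ _ _ _ (by omega) rfl (by omega) rfl]
    rw [fold_b (r - i) i 0 (by omega)]
    rw [show (mkPB i (0 + (r - i)) (i + 0 + (r - i)) 0 (by omega))
        = mkPB i (r - i) r 0 (by omega) from
      mkPB_congr _ _ _ _ _ _ _ _ _ _ rfl (by omega) (by omega) rfl]
    rw [fold_d s i (r - i) r 0 (by omega)]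
    exact congrArg some (mkPB_congr _ _ _ _ _ _ _ _ _ _ rfl (by omega) rfl (by omega))
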